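/- Riedel–Sahoo theorem: Let a < b and let f : ℝ → ℝ be differentiable at every point of the closed interval [a, b]. Then there exists ξ ∈ (a, b) such that f(ξ) - f(a) = (ξ - a) * f'(ξ) - (1/2) * ((f'(b) - f'(a))/(b - a)) * (ξ - a)^2. -/

import Mathlib

open Set Filter

private noncomputable def flettF (g g' : ℝ → ℝ) (a : ℝ) : ℝ → ℝ :=
  fun x => if x = a then g' a else (g x - g a) / (x - a)

private lemma flettF_hasDeriv (g g' : ℝ → ℝ) (a b : ℝ)
    (hg : ∀ x ∈ Set.Icc a b, HasDerivWithinAt g (g' x) (Set.Icc a b) x)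
    {x : ℝ} (hx : x ∈ Set.Ioc a b) :
    HasDerivWithinAt (flettF g g' a)
      ((g' x * (x - a) - (g x - g a)) / (x - a) ^ 2) (Set.Icc a b) x := by
  have hxa : x ≠ a := ne_of_gt hx.1
  have hsub : (x : ℝ) - a ≠ 0 := sub_ne_zero.2 hxa
  have hgx : HasDerivWithinAt g (g' x) (Set.Icc a b) x := hg x ⟨hx.1.le, hx.2⟩
  have hdiv : HasDerivWithinAt (fun y => (g y - g a) / (y - a))
      ((g' x * (x - a) - (g x - g a) * 1) / (x - a) ^ 2) (Set.Icc a b) x :=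
    (hgx.sub_const (g a)).div ((hasDerivWithinAt_id x _).sub_const a) hsub
  have heq : flettF g g' a =ᶠ[nhdsWithin x (Set.Icc a b)] fun y => (g y - g a) / (y - a) := by
    filter_upwards [nhdsWithin_le_nhds (eventually_ne_nhds hxa)] with y hy
    simp [flettF, hy]
  have := hdiv.congr_of_eventuallyEq heq (by simp [flettF, hxa])
  simpa using this

private lemma flettF_hasDerivAt (g g' : ℝ → ℝ) (a b : ℝ)
    (hg : ∀ x ∈ Set.Icc a b, HasDerivWithinAt g (g' x) (Set.Icc a b) x)
    {x : ℝ} (hx : x ∈ Set.Ioo a b) :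
    HasDerivAt (flettF g g' a)
      ((g' x * (x - a) - (g x - g a)) / (x - a) ^ 2) x :=
  (flettF_hasDeriv g g' a b hg ⟨hx.1, hx.2.le⟩).hasDerivAt
    (Icc_mem_nhds hx.1 hx.2)

private lemma flettF_contOn (g g' : ℝ → ℝ) (a b : ℝ)
    (hg : ∀ x ∈ Set.Icc a b, HasDerivWithinAt g (g' x) (Set.Icc a b) x) :
    ContinuousOn (flettF g g' a) (Set.Icc a b) := by
  intro x hx
  rcases eq_or_ne x a with rfl | hxa
  · rw [← continuousWithinAt_diff_self]
    have hslope : Filter.Tendsto (slope g x) (nhdsWithin x (Set.Icc x b \ {x}))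
        (nhds (g' x)) := hasDerivWithinAt_iff_tendsto_slope.1 (hg x hx)
    have : Filter.Tendsto (flettF g g' x) (nhdsWithin x (Set.Icc x b \ {x}))
        (nhds (g' x)) := by
      refine hslope.congr' ?_
      filter_upwards [self_mem_nhdsWithin] with y hy
      have hyx : y ≠ x := hy.2
      simp only [flettF, if_neg hyx, slope_def_field]
    simpa [ContinuousWithinAt, flettF] using this
  · have hx' : x ∈ Set.Ioc a b := ⟨lt_of_le_of_ne hx.1 (Ne.symm hxa), hx.2⟩
    exact (flettF_hasDeriv g g' a b hg hx').continuousWithinAt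

private lemma flett_aux (g g' : ℝ → ℝ) (a b : ℝ) (hab : a < b)
    (hg : ∀ x ∈ Set.Icc a b, HasDerivWithinAt g (g' x) (Set.Icc a b) x)
    (heq : g' a = g' b)
    (hlt : (g b - g a) / (b - a) < g' a) :
    ∃ ξ ∈ Set.Ioo a b, g ξ - g a = (ξ - a) * g' ξ := by
  set F := flettF g g' a with hF
  have hba : (0:ℝ) < b - a := sub_pos.2 hab
  have hFa : F a = g' a := by simp [hF, flettF]
  have hFb : F b = (g b - g a) / (b - a) := by simp [hF, flettF, hab.ne']
  obtain ⟨c, hc, hmin⟩ := isCompact_Icc.exists_isMinOn (nonempty_Icc.2 hab.le)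
    (flettF_contOn g g' a b hg)
  -- there is a point where F is smaller than F b
  have hD : 0 < (g' b * (b - a) - (g b - g a)) / (b - a) ^ 2 := by
    apply div_pos _ (pow_pos hba 2)
    have h3 : g b - g a < g' a * (b - a) := (div_lt_iff₀ hba).1 hlt
    rw [← heq]
    linarith
  obtain ⟨y, hyIcc, hylt⟩ : ∃ y ∈ Set.Icc a b, F y < F b := by
    have hder := flettF_hasDeriv g g' a b hg (⟨hab, le_refl b⟩ : b ∈ Set.Ioc a b)
    have hslope := hasDerivWithinAt_iff_tendsto_slope.1 hder
    have hev : ∀ᶠ y in nhdsWithin b (Set.Icc a b \ {b}),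
        0 < slope F b y := hslope.eventually (eventually_gt_nhds hD)
    have hne : (nhdsWithin b (Set.Icc a b \ {b})).NeBot := by
      rw [Set.Icc_sdiff_right]
      exact right_nhdsWithin_Ico_neBot hab
    obtain ⟨y, hy1, hy2⟩ := (hev.and self_mem_nhdsWithin).exists
    have hyb : y < b := lt_of_le_of_ne hy2.1.2 hy2.2
    refine ⟨y, hy2.1, ?_⟩
    rw [slope_def_field] at hy1
    rcases div_pos_iff.1 hy1 with ⟨h1, h2⟩ | ⟨h1, h2⟩
    · linarith
    · linarith
  have hcb : c ≠ b := by
    intro h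
    have := hmin hyIcc
    rw [← hF, h] at this
    exact absurd this (not_le.2 hylt)
  have hca : c ≠ a := by
    intro h
    have h1 : F c ≤ F b := hmin (Set.right_mem_Icc.2 hab.le)
    rw [h, hFa, hFb] at h1
    linarith
  have hcIoo : c ∈ Set.Ioo a b :=
    ⟨lt_of_le_of_ne hc.1 (Ne.symm hca), lt_of_le_of_ne hc.2 hcb⟩
  have hder := flettF_hasDerivAt g g' a b hg hcIoo
  have hzero := (hmin.isLocalMin (Icc_mem_nhds hcIoo.1 hcIoo.2)).hasDerivAt_eq_zero hder
  refine ⟨c, hcIoo, ?_⟩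
  have hca' : (c : ℝ) - a ≠ 0 := sub_ne_zero.2 (ne_of_gt hcIoo.1)
  have hnum := (div_eq_zero_iff.1 hzero).resolve_right (pow_ne_zero 2 hca')
  linear_combination -hnum

private lemma flett (g g' : ℝ → ℝ) (a b : ℝ) (hab : a < b)
    (hg : ∀ x ∈ Set.Icc a b, HasDerivWithinAt g (g' x) (Set.Icc a b) x)
    (heq : g' a = g' b) :
    ∃ ξ ∈ Set.Ioo a b, g ξ - g a = (ξ - a) * g' ξ := by
  rcases lt_trichotomy ((g b - g a) / (b - a)) (g' a) with h | h | h
  · exact flett_aux g g' a b hab hg heq h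
  · -- Rolle case
    have hFa : flettF g g' a a = g' a := by simp [flettF]
    have hFb : flettF g g' a b = (g b - g a) / (b - a) := by simp [flettF, hab.ne']
    obtain ⟨c, hc, hzero⟩ := exists_hasDerivAt_eq_zero hab
      (flettF_contOn g g' a b hg) (by rw [hFa, hFb, h])
      (fun x hx => flettF_hasDerivAt g g' a b hg hx)
    refine ⟨c, hc, ?_⟩
    have hca' : (c : ℝ) - a ≠ 0 := sub_ne_zero.2 (ne_of_gt hc.1)
    have hnum := (div_eq_zero_iff.1 hzero).resolve_right (pow_ne_zero 2 hca')
    linear_combination -hnum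
  · obtain ⟨ξ, hξ, hval⟩ := flett_aux (fun x => -g x) (fun x => -g' x) a b hab
      (fun x hx => (hg x hx).neg) (by simp [heq])
      (by
        have h2 : (-g b - -g a) / (b - a) = -((g b - g a) / (b - a)) := by ring
        rw [h2]
        linarith)
    refine ⟨ξ, hξ, ?_⟩
    linear_combination -hval

/-- Riedel–Sahoo theorem. -/
theorem riedel_sahoo (f f' : ℝ → ℝ) (a b : ℝ) (hab : a < b)
    (hf : ∀ x ∈ Set.Icc a b, HasDerivWithinAt f (f' x) (Set.Icc a b) x) :
    ∃ ξ ∈ Set.Ioo a b,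
      f ξ - f a = (ξ - a) * f' ξ - (1 / 2) * ((f' b - f' a) / (b - a)) * (ξ - a) ^ 2 := by
  set K : ℝ := (f' b - f' a) / (b - a) with hK
  have hba : (b : ℝ) - a ≠ 0 := sub_ne_zero.2 hab.ne'
  obtain ⟨ξ, hξ, hval⟩ := flett (fun x => f x - K / 2 * (x - a) ^ 2)
    (fun x => f' x - K * (x - a)) a b hab
    (fun x hx => by
      have h1 : HasDerivWithinAt (fun y : ℝ => K / 2 * (y - a) ^ 2)
          (K / 2 * (2 * (x - a) ^ 1 * 1)) (Set.Icc a b) x :=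
        (((hasDerivWithinAt_id x _).sub_const a).pow 2).const_mul (K / 2)
      have : HasDerivWithinAt (fun y => f y - K / 2 * (y - a) ^ 2) _ (Set.Icc a b) x :=
        (hf x hx).sub h1
      convert this using 1
      ring)
    (by
      have h2 : K * (b - a) = f' b - f' a := by rw [hK]; field_simp
      linarith)
  refine ⟨ξ, hξ, ?_⟩
  linear_combination hval
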